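/- Suppose Q is additionally irreducible and S_k, I_k, D_k, Θ_k > 0 for all k ∈ K satisfy β_k S_k Θ_k = (r_k+γ_k)(I_k+D_k), σ_k β_k I_k Θ_k = (r_k+γ_k) D_k, and Θ = Q(I+D). Then the matrix A^* defined blockwise by A_{ks} = q_{ks} B_k − δ_{ks} C_k with B_k = β_k [[S_k, S_k],[σ_k I_k/2, σ_k I_k/2]] and C_k = (γ_k+r_k)·Id_2 + σ_k β_k Θ_k·[[1,0],[−1/2,0]] is a Metzler matrix, it is irreducible, 0 is an eigenvalue of A^* whose eigenspace is one-dimensional and spanned by the positive vector X^* = ((I_k, D_k)^T)_{k∈K}, and every nonzero eigenvalue of A^* has strictly negative real part (i.e. the spectral bound of A^* is 0 and is a simple eigenvalue). -/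

import Mathlib

open Matrix Finset

lemma pow_entry_nonneg {n : Type*} [Fintype n] [DecidableEq n] (M : Matrix n n ℝ)
    (h : ∀ i j, 0 ≤ M i j) : ∀ p i j, 0 ≤ (M ^ p) i j := by
  intro p
  induction p with
  | zero => intro i j; rw [pow_zero, Matrix.one_apply]; split <;> norm_num
  | succ p ih =>
      intro i j
      rw [pow_succ, Matrix.mul_apply]
      exact Finset.sum_nonneg fun k _ => mul_nonneg (ih i k) (h k j)

lemma pow_entry_pos_trans {n : Type*} [Fintype n] [DecidableEq n] (M : Matrix n n ℝ)
    (h : ∀ i j, 0 ≤ M i j) {p q : ℕ} {i j k : n}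
    (hp : 0 < (M ^ p) i j) (hq : 0 < (M ^ q) j k) : 0 < (M ^ (p + q)) i k := by
  rw [pow_add, Matrix.mul_apply]
  refine Finset.sum_pos' (fun z _ => mul_nonneg (pow_entry_nonneg M h p i z)
    (pow_entry_nonneg M h q z k)) ⟨j, Finset.mem_univ j, mul_pos hp hq⟩

lemma exists_pos_factor {n : Type*} [Fintype n] [DecidableEq n] (Q : Matrix n n ℝ)
    (hQ : ∀ i j, 0 ≤ Q i j) {p : ℕ} {k s : n} (hpos : 0 < (Q * Q ^ p) k s) :
    ∃ t, 0 < Q k t ∧ 0 < (Q ^ p) t s := by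
  rw [Matrix.mul_apply] at hpos
  have : ∃ t ∈ Finset.univ, 0 < Q k t * (Q ^ p) t s := by
    by_contra hcon
    push_neg at hcon
    have : ∑ t, Q k t * (Q ^ p) t s ≤ 0 :=
      Finset.sum_nonpos fun t ht => hcon t ht
    linarith
  obtain ⟨t, _, ht⟩ := this
  rcases mul_pos_iff.mp ht with ⟨h1, h2⟩ | ⟨h1, h2⟩
  · exact ⟨t, h1, h2⟩
  · exact absurd h1 (not_lt.mpr (hQ k t))

theorem neutral_matrix_spectral_properties {K : Type*} [Fintype K] [DecidableEq K] [Nonempty K]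
    (β r γ σ : K → ℝ) (hβ : ∀ k, 0 < β k) (hr : ∀ k, 0 < r k)
    (hγ : ∀ k, 0 < γ k) (hσ : ∀ k, 0 < σ k)
    (Q : Matrix K K ℝ) (hQ : ∀ k s, 0 ≤ Q k s)
    (hQirr : ∀ k s, ∃ n : ℕ, 1 ≤ n ∧ 0 < (Q ^ n) k s)
    (S I D Θ : K → ℝ)
    (hSpos : ∀ k, 0 < S k) (hIpos : ∀ k, 0 < I k)
    (hDpos : ∀ k, 0 < D k) (hΘpos : ∀ k, 0 < Θ k)
    (heq1 : ∀ k, β k * S k * Θ k = (r k + γ k) * (I k + D k))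
    (heq2 : ∀ k, σ k * β k * I k * Θ k = (r k + γ k) * D k)
    (hΘ : ∀ k, Θ k = ∑ s, Q k s * (I s + D s))
    (B C : K → Matrix (Fin 2) (Fin 2) ℝ)
    (hB : ∀ k, B k = β k • !![S k, S k; σ k * I k / 2, σ k * I k / 2])
    (hC : ∀ k, C k = (γ k + r k) • (1 : Matrix (Fin 2) (Fin 2) ℝ) +
      (σ k * β k * Θ k) • !![1, 0; -(1/2 : ℝ), 0])
    (A : Matrix (K × Fin 2) (K × Fin 2) ℝ)
    (hA : ∀ k s a b, A (k, a) (s, b) = Q k s * B k a b - (if k = s then C k a b else 0))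
    (X : K × Fin 2 → ℝ)
    (hX : ∀ k, X (k, 0) = I k ∧ X (k, 1) = D k) :
    (∀ x y : K × Fin 2, x ≠ y → 0 ≤ A x y) ∧
    (∃ m : ℝ, (∀ x y, 0 ≤ (A + m • (1 : Matrix (K × Fin 2) (K × Fin 2) ℝ)) x y) ∧
      (∀ x y, ∃ n : ℕ, 1 ≤ n ∧
        0 < ((A + m • (1 : Matrix (K × Fin 2) (K × Fin 2) ℝ)) ^ n) x y)) ∧
    (∀ x, 0 < X x) ∧
    A.mulVec X = 0 ∧
    (∀ v : K × Fin 2 → ℝ, A.mulVec v = 0 → ∃ c : ℝ, v = c • X) ∧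
    (∀ μ ∈ spectrum ℂ (A.map Complex.ofReal), μ ≠ 0 → μ.re < 0) := by
  -- entries of B and C
  have hB00 : ∀ k, B k 0 0 = β k * S k := by intro k; rw [hB]; simp
  have hB01 : ∀ k, B k 0 1 = β k * S k := by intro k; rw [hB]; simp
  have hB10 : ∀ k, B k 1 0 = β k * (σ k * I k / 2) := by intro k; rw [hB]; simp
  have hB11 : ∀ k, B k 1 1 = β k * (σ k * I k / 2) := by intro k; rw [hB]; simp
  have hC00 : ∀ k, C k 0 0 = (γ k + r k) + σ k * β k * Θ k := by
    intro k; rw [hC]; simp [Matrix.one_apply]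
  have hC01 : ∀ k, C k 0 1 = 0 := by intro k; rw [hC]; simp [Matrix.one_apply]
  have hC10 : ∀ k, C k 1 0 = -(σ k * β k * Θ k) / 2 := by
    intro k; rw [hC]; simp [Matrix.one_apply]; ring
  have hC11 : ∀ k, C k 1 1 = γ k + r k := by intro k; rw [hC]; simp [Matrix.one_apply]
  have hfin2 : ∀ a : Fin 2, a = 0 ∨ a = 1 := by decide
  have hσI : ∀ k, 0 < σ k * I k / 2 := fun k => by
    have := hσ k; have := hIpos k; positivity
  have hBpos : ∀ k (a b : Fin 2), 0 < B k a b := by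
    intro k a b
    rcases hfin2 a with rfl | rfl <;> rcases hfin2 b with rfl | rfl <;>
      simp only [hB00, hB01, hB10, hB11] <;>
      [exact mul_pos (hβ k) (hSpos k); exact mul_pos (hβ k) (hSpos k);
       exact mul_pos (hβ k) (hσI k); exact mul_pos (hβ k) (hσI k)]
  have hXpos : ∀ x : K × Fin 2, 0 < X x := by
    rintro ⟨k, a⟩
    rcases hfin2 a with rfl | rfl
    · rw [(hX k).1]; exact hIpos k
    · rw [(hX k).2]; exact hDpos k
  -- Metzler property
  have hMetzler : ∀ x y : K × Fin 2, x ≠ y → 0 ≤ A x y := by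
    rintro ⟨k, a⟩ ⟨s, b⟩ hne
    by_cases hks : k = s
    · subst hks
      have hab : a ≠ b := fun h => hne (by rw [h])
      rw [hA, if_pos rfl]
      rcases hfin2 a with rfl | rfl <;> rcases hfin2 b with rfl | rfl
      · exact absurd rfl hab
      · rw [hC01]
        have := mul_nonneg (hQ k k) (hBpos k 0 1).le
        linarith
      · rw [hC10]
        have h1 := mul_nonneg (hQ k k) (hBpos k 1 0).le
        have h2 : 0 ≤ σ k * β k * Θ k := by
          have := hσ k; have := hβ k; have := hΘpos k; positivity
        linarith
      · exact absurd rfl hab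
    · rw [hA, if_neg hks, sub_zero]
      exact mul_nonneg (hQ k s) (hBpos k a b).le
  -- choice of the shift m
  set m : ℝ := 1 + ∑ x : K × Fin 2, |A x x| with hm_def
  have hm1 : 1 ≤ m := by
    have : 0 ≤ ∑ x : K × Fin 2, |A x x| :=
      Finset.sum_nonneg fun x _ => abs_nonneg _
    simp only [hm_def]; linarith
  have hm0 : 0 < m := lt_of_lt_of_le one_pos hm1
  set M : Matrix (K × Fin 2) (K × Fin 2) ℝ :=
    A + m • (1 : Matrix (K × Fin 2) (K × Fin 2) ℝ) with hM_def
  have hMoff : ∀ x y : K × Fin 2, x ≠ y → M x y = A x y := by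
    intro x y hxy
    simp [hM_def, Matrix.add_apply, Matrix.smul_apply, Matrix.one_apply, hxy]
  have hMdiag : ∀ x : K × Fin 2, 0 < M x x := by
    intro x
    have h1 : M x x = A x x + m := by
      simp [hM_def, Matrix.add_apply, Matrix.smul_apply, Matrix.one_apply]
    have h2 : |A x x| ≤ ∑ y : K × Fin 2, |A y y| :=
      Finset.single_le_sum (fun y _ => abs_nonneg (A y y)) (Finset.mem_univ x)
    have h3 := neg_abs_le (A x x)
    rw [h1, hm_def]; linarith
  have hMnn : ∀ x y : K × Fin 2, 0 ≤ M x y := by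
    intro x y
    by_cases hxy : x = y
    · subst hxy; exact (hMdiag x).le
    · rw [hMoff x y hxy]; exact hMetzler x y hxy
  -- positive edges of M from positive entries of Q
  have hedge : ∀ k s (a b : Fin 2), 0 < Q k s → 0 < M (k, a) (s, b) := by
    intro k s a b hq
    by_cases hxy : ((k, a) : K × Fin 2) = (s, b)
    · rw [hxy]; exact hMdiag _
    · rw [hMoff _ _ hxy]
      by_cases hks : k = s
      · subst hks
        have hab : a ≠ b := fun h => hxy (by rw [h])
        rw [hA, if_pos rfl]
        rcases hfin2 a with rfl | rfl <;> rcases hfin2 b with rfl | rfl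
        · exact absurd rfl hab
        · rw [hC01]
          have := mul_pos hq (hBpos k 0 1); linarith
        · rw [hC10]
          have h1 := mul_pos hq (hBpos k 1 0)
          have h2 : 0 < σ k * β k * Θ k := by
            have := hσ k; have := hβ k; have := hΘpos k; positivity
          linarith
        · exact absurd rfl hab
      · rw [hA, if_neg hks, sub_zero]
        exact mul_pos hq (hBpos k a b)
  -- irreducibility of M
  have hMirr : ∀ x y : K × Fin 2, ∃ n : ℕ, 1 ≤ n ∧ 0 < (M ^ n) x y := by
    have key : ∀ p : ℕ, ∀ k s : K, 0 < (Q ^ (p + 1)) k s →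
        ∀ a b : Fin 2, ∃ n : ℕ, 1 ≤ n ∧ 0 < (M ^ n) (k, a) (s, b) := by
      intro p
      induction p with
      | zero =>
          intro k s hq a b
          rw [pow_one] at hq
          exact ⟨1, le_refl 1, by rw [pow_one]; exact hedge k s a b hq⟩
      | succ p ih =>
          intro k s hq a b
          rw [pow_succ'] at hq
          obtain ⟨t, hqt, hts⟩ := exists_pos_factor Q hQ hq
          obtain ⟨N, hN1, hNpos⟩ := ih t s hts (0 : Fin 2) b
          refine ⟨1 + N, by omega, ?_⟩
          have h1 : 0 < (M ^ 1) (k, a) (t, (0 : Fin 2)) := by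
            rw [pow_one]; exact hedge k t a 0 hqt
          exact pow_entry_pos_trans M hMnn h1 hNpos
    rintro ⟨k, a⟩ ⟨s, b⟩
    obtain ⟨n, hn1, hnpos⟩ := hQirr k s
    obtain ⟨p, rfl⟩ : ∃ p, n = p + 1 := ⟨n - 1, by omega⟩
    exact key p k s hnpos a b
  -- M entrywise description
  have hMent : ∀ x y : K × Fin 2, M x y = A x y + (if x = y then m else 0) := by
    intro x y
    simp only [hM_def, Matrix.add_apply, Matrix.smul_apply, Matrix.one_apply, smul_eq_mul,
      mul_ite, mul_one, mul_zero]
  -- A.mulVec X = 0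
  have hAX : A.mulVec X = 0 := by
    funext x
    obtain ⟨k, a⟩ := x
    have hsum : A.mulVec X (k, a) = ∑ s, (A (k, a) (s, 0) * X (s, 0) + A (k, a) (s, 1) * X (s, 1)) := by
      rw [Matrix.mulVec, dotProduct, Fintype.sum_prod_type]
      exact Finset.sum_congr rfl fun s _ => by rw [Fin.sum_univ_two]
    rcases hfin2 a with rfl | rfl
    · have hterm : ∀ s, A (k, 0) (s, 0) * X (s, 0) + A (k, 0) (s, 1) * X (s, 1)
          = β k * S k * (Q k s * (I s + D s))
            - (if k = s then ((γ k + r k) + σ k * β k * Θ k) * I s else 0) := by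
        intro s
        rw [hA, hA, hB00, hB01, (hX s).1, (hX s).2]
        split_ifs with h
        · subst h; rw [hC00, hC01]; ring
        · ring
      rw [hsum, Finset.sum_congr rfl fun s _ => hterm s, Finset.sum_sub_distrib,
        ← Finset.mul_sum, ← hΘ k, Finset.sum_ite_eq, if_pos (Finset.mem_univ k)]
      have h1 := heq1 k
      have h2 := heq2 k
      simp only [Pi.zero_apply]
      linear_combination h1 - h2
    · have hterm : ∀ s, A (k, 1) (s, 0) * X (s, 0) + A (k, 1) (s, 1) * X (s, 1)
          = β k * (σ k * I k / 2) * (Q k s * (I s + D s))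
            - (if k = s then (-(σ k * β k * Θ k) / 2) * I s + (γ k + r k) * D s else 0) := by
        intro s
        rw [hA, hA, hB10, hB11, (hX s).1, (hX s).2]
        split_ifs with h
        · subst h; rw [hC10, hC11]; ring
        · ring
      rw [hsum, Finset.sum_congr rfl fun s _ => hterm s, Finset.sum_sub_distrib,
        ← Finset.mul_sum, ← hΘ k, Finset.sum_ite_eq, if_pos (Finset.mem_univ k)]
      have h2 := heq2 k
      simp only [Pi.zero_apply]
      linear_combination h2
  -- M has eigenvalue m with eigenvector X
  have hMX : M.mulVec X = m • X := by
    simp [hM_def, Matrix.add_mulVec, hAX, Matrix.smul_mulVec, Matrix.one_mulVec]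
  -- kernel of A is spanned by X
  have hker : ∀ v : K × Fin 2 → ℝ, A.mulVec v = 0 → ∃ c : ℝ, v = c • X := by
    intro v hv
    obtain ⟨x0, -, hx0min⟩ := Finset.exists_min_image (Finset.univ : Finset (K × Fin 2))
      (fun x => v x / X x) Finset.univ_nonempty
    set c : ℝ := v x0 / X x0 with hc_def
    refine ⟨c, ?_⟩
    set w : K × Fin 2 → ℝ := fun x => v x - c * X x with hw_def
    have hwnn : ∀ x, 0 ≤ w x := by
      intro x
      have h := hx0min x (Finset.mem_univ x)
      have h2 : c * X x ≤ v x := (le_div_iff₀ (hXpos x)).1 h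
      simp only [hw_def]; linarith
    have hwx0 : w x0 = 0 := by
      simp only [hw_def, hc_def]
      rw [div_mul_cancel₀ _ (hXpos x0).ne', sub_self]
    have hweq : w = v - c • X := by funext x; simp [hw_def]
    have hAw : A.mulVec w = 0 := by
      rw [hweq, Matrix.mulVec_sub, hv, Matrix.mulVec_smul, hAX]
      simp
    have hMw : M.mulVec w = m • w := by
      simp [hM_def, Matrix.add_mulVec, hAw, Matrix.smul_mulVec, Matrix.one_mulVec]
    have hMnw : ∀ n : ℕ, (M ^ n).mulVec w = m ^ n • w := by
      intro n
      induction n with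
      | zero => simp [Matrix.one_mulVec]
      | succ n ih =>
          rw [pow_succ', ← Matrix.mulVec_mulVec, ih, Matrix.mulVec_smul, hMw,
            smul_smul, ← pow_succ, pow_succ']
    by_cases hw0 : w = 0
    · funext x
      have := congrFun hw0 x
      simp only [hw_def, Pi.zero_apply] at this
      simp only [Pi.smul_apply, smul_eq_mul]
      linarith
    · exfalso
      obtain ⟨y, hy⟩ := Function.ne_iff.1 hw0
      have hwy : 0 < w y := lt_of_le_of_ne (hwnn y) (Ne.symm hy)
      obtain ⟨n, -, hn⟩ := hMirr x0 y
      have h1 : (M ^ n).mulVec w x0 = 0 := by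
        rw [hMnw n]
        simp [hwx0]
      have h2 : 0 < (M ^ n).mulVec w x0 := by
        rw [Matrix.mulVec, dotProduct]
        refine Finset.sum_pos' (fun z _ => mul_nonneg (pow_entry_nonneg M hMnn n x0 z) (hwnn z))
          ⟨y, Finset.mem_univ y, mul_pos hn hwy⟩
      linarith
  -- spectral part
  have hspec : ∀ μ ∈ spectrum ℂ (A.map Complex.ofReal), μ ≠ 0 → μ.re < 0 := by
    intro μ hμ hμ0
    set A' : Matrix (K × Fin 2) (K × Fin 2) ℂ := A.map Complex.ofReal with hA'_def
    rw [spectrum.mem_iff] at hμ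
    have hdet0 : (algebraMap ℂ (Matrix (K × Fin 2) (K × Fin 2) ℂ) μ - A').det = 0 := by
      by_contra h
      exact hμ ((Matrix.isUnit_iff_isUnit_det _).2 (isUnit_iff_ne_zero.2 h))
    obtain ⟨u, hu0, huz⟩ := Matrix.exists_mulVec_eq_zero_iff.2 hdet0
    have hu : A'.mulVec u = μ • u := by
      rw [Matrix.sub_mulVec] at huz
      have h1 : (algebraMap ℂ (Matrix (K × Fin 2) (K × Fin 2) ℂ) μ).mulVec u = μ • u := by
        rw [Algebra.algebraMap_eq_smul_one, Matrix.smul_mulVec, Matrix.one_mulVec]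
      rw [h1] at huz
      exact (sub_eq_zero.1 huz).symm
    -- the complex eigen-relation for M
    have hA'ent : ∀ x y, A' x y = ((A x y : ℝ) : ℂ) := fun x y => rfl
    have hMu : ∀ x, ∑ y, ((M x y : ℝ) : ℂ) * u y = (μ + m) * u x := by
      intro x
      have h1 : ∑ y, ((A x y : ℝ) : ℂ) * u y = μ * u x := by
        have := congrFun hu x
        rw [Matrix.mulVec, dotProduct] at this
        simpa [hA'ent] using this
      have h2 : ∑ y, ((M x y : ℝ) : ℂ) * u y
          = ∑ y, (((A x y : ℝ) : ℂ) * u y + (if x = y then (m : ℂ) * u y else 0)) := by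
        refine Finset.sum_congr rfl fun y _ => ?_
        rw [hMent x y]
        split_ifs with h <;> push_cast <;> ring
      rw [h2, Finset.sum_add_distrib, h1, Finset.sum_ite_eq, if_pos (Finset.mem_univ x)]
      ring
    -- maximize |u|/X
    obtain ⟨i, -, hi⟩ := Finset.exists_max_image (Finset.univ : Finset (K × Fin 2))
      (fun x => ‖u x‖ / X x) Finset.univ_nonempty
    set ρ : ℝ := ‖u i‖ / X i with hρ_def
    have hρpos : 0 < ρ := by
      obtain ⟨j, hj⟩ := Function.ne_iff.1 hu0
      have h1 : 0 < ‖u j‖ / X j :=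
        div_pos (by simpa using (norm_pos_iff.2 hj)) (hXpos j)
      exact lt_of_lt_of_le h1 (hi j (Finset.mem_univ j))
    have habs : ∀ x, ‖u x‖ ≤ ρ * X x := by
      intro x
      have h := hi x (Finset.mem_univ x)
      calc ‖u x‖ = (‖u x‖ / X x) * X x := by
            rw [div_mul_cancel₀ _ (hXpos x).ne']
        _ ≤ ρ * X x := by
            exact mul_le_mul_of_nonneg_right h (hXpos x).le
    have habsi : ‖u i‖ = ρ * X i := by
      rw [hρ_def, div_mul_cancel₀ _ (hXpos i).ne']
    have hMXi : ∑ y, M i y * X y = m * X i := by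
      have := congrFun hMX i
      rw [Matrix.mulVec, dotProduct] at this
      simpa using this
    -- the key bound |μ + m| ≤ m
    have hkey : ‖μ + m‖ * (ρ * X i) ≤ m * (ρ * X i) := by
      calc ‖μ + m‖ * (ρ * X i)
          = ‖(μ + m) * u i‖ := by rw [norm_mul, habsi]
        _ = ‖∑ y, ((M i y : ℝ) : ℂ) * u y‖ := by rw [hMu i]
        _ ≤ ∑ y, ‖((M i y : ℝ) : ℂ) * u y‖ := norm_sum_le _ _
        _ = ∑ y, M i y * ‖u y‖ := by
            refine Finset.sum_congr rfl fun y _ => ?_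
            rw [norm_mul, Complex.norm_real, Real.norm_eq_abs, abs_of_nonneg (hMnn i y)]
        _ ≤ ∑ y, M i y * (ρ * X y) :=
            Finset.sum_le_sum fun y _ => mul_le_mul_of_nonneg_left (habs y) (hMnn i y)
        _ = ρ * ∑ y, M i y * X y := by rw [Finset.mul_sum]; exact Finset.sum_congr rfl fun y _ => by ring
        _ = ρ * (m * X i) := by rw [hMXi]
        _ = m * (ρ * X i) := by ring
    have hbound : ‖μ + m‖ ≤ m :=
      le_of_mul_le_mul_right hkey (mul_pos hρpos (hXpos i))
    -- conclude Re μ < 0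
    have hsq : (μ.re + m) * (μ.re + m) + μ.im * μ.im ≤ m * m := by
      have h1 : ‖μ + m‖ * ‖μ + m‖ ≤ m * m :=
        mul_le_mul hbound hbound (norm_nonneg _) (le_of_lt hm0)
      have h2 : ‖μ + m‖ * ‖μ + m‖ = Complex.normSq (μ + m) := by
        rw [← Complex.sq_norm, sq]
      rw [h2, Complex.normSq_apply] at h1
      simpa using h1
    have hne : μ.re ≠ 0 ∨ μ.im ≠ 0 := by
      by_contra h
      push_neg at h
      exact hμ0 (Complex.ext h.1 h.2)
    by_contra hre
    push_neg at hre
    have hsum0 : μ.re * μ.re + μ.im * μ.im ≤ 0 := by nlinarith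
    have h1 : μ.re = 0 := by nlinarith [mul_self_nonneg μ.re, mul_self_nonneg μ.im]
    have h2 : μ.im = 0 := by nlinarith [mul_self_nonneg μ.re, mul_self_nonneg μ.im]
    tauto
  exact ⟨hMetzler, ⟨m, hMnn, hMirr⟩, hXpos, hAX, hker, hspec⟩
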